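/- arXiv:1905.13349 — 2 statements merged into one kernel-verified Lean document; each statement's English description precedes it below -/
import Mathlib

section
/- Fix ℓ ∈ ℕ with ℓ ≥ 1 and a ∈ (0, 1/5). For n ∈ ℕ write n = 2ℓm + r with m ∈ ℕ and r ∈ {−1, 0, …, 2ℓ−2}, and define B_n(x) = −Σ_{j=0}^{m−1} Σ_{k=0}^{ℓ−1} (cos((2ℓj+k)x) + cos((2ℓj+ℓ+k)x)) ((2ℓj+k) sin((2ℓj+k)x) + (2ℓj+ℓ+k) sin((2ℓj+ℓ+k)x)) − Σ_{j=2ℓm}^{n} j sin(jx) cos(jx). Let E_n = [0, π/ℓ] \ ([0, n^{−a}] ∪ [π/(2ℓ) − n^{−a}, π/(2ℓ) + n^{−a}] ∪ [π/ℓ − n^{−a}, π/ℓ]). Then there exist C > 0 and N such that for all n ≥ N and all x ∈ E_n, |B_n(x)| ≤ C n^{1+a}. -/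
open Real Set

lemma helper (u v : ℝ) : Real.cos u * Real.sin v = (Real.sin (v+u) + Real.sin (v-u))/2 := by
  rw [Real.sin_add, Real.sin_sub]; ring

lemma trig_id (L K J x : ℝ) :
    (Real.cos ((2*L*J + K) * x) + Real.cos ((2*L*J + L + K) * x)) *
      ((2*L*J + K) * Real.sin ((2*L*J + K)*x) + (2*L*J + L + K) * Real.sin ((2*L*J + L + K)*x))
    = (L*J + K/2) * Real.sin (J*(4*L*x) + 2*K*x)
      + (L*J + (L+K)/2) * Real.sin (J*(4*L*x) + (2*L+2*K)*x)
      + (2*L*J + (L+2*K)/2) * Real.sin (J*(4*L*x) + (L+2*K)*x)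
      + L/2 * Real.sin (L*x) := by
  have e1 : (2*L*J + K) * x + (2*L*J + K) * x = J*(4*L*x) + 2*K*x := by ring
  have e2 : (2*L*J + L + K) * x + (2*L*J + L + K) * x = J*(4*L*x) + (2*L+2*K)*x := by ring
  have e3 : (2*L*J + L + K) * x + (2*L*J + K) * x = J*(4*L*x) + (L+2*K)*x := by ring
  have e4 : (2*L*J + L + K) * x - (2*L*J + K) * x = L*x := by ring
  have e5 : (2*L*J + K) * x - (2*L*J + L + K) * x = -(L*x) := by ring
  have e6 : (2*L*J + K) * x + (2*L*J + L + K) * x = J*(4*L*x) + (L+2*K)*x := by ring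
  have e7 : (2*L*J + K) * x - (2*L*J + K) * x = 0 := by ring
  have e8 : (2*L*J + L + K) * x - (2*L*J + L + K) * x = 0 := by ring
  have h1 := helper ((2*L*J + K) * x) ((2*L*J + K) * x)
  have h2 := helper ((2*L*J + K) * x) ((2*L*J + L + K) * x)
  have h3 := helper ((2*L*J + L + K) * x) ((2*L*J + K) * x)
  have h4 := helper ((2*L*J + L + K) * x) ((2*L*J + L + K) * x)
  rw [e1, e7] at h1
  rw [e3, e4] at h2
  rw [e6, e5] at h3
  rw [e2, e8] at h4
  rw [Real.sin_neg, Real.sin_zero] at *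
  linear_combination (2*L*J+K)*h1 + (2*L*J+L+K)*h2 + (2*L*J+K)*h3 + (2*L*J+L+K)*h4

lemma dirichlet_bound (θ φ : ℝ) (h : Real.sin (θ/2) ≠ 0) (M : ℕ) :
    |∑ j ∈ Finset.range M, Real.sin (j*θ + φ)| ≤ 1 / |Real.sin (θ/2)| := by
  set z : ℂ := Complex.exp (θ * Complex.I) with hz
  have hz1 : z ≠ 1 := by
    intro hzz
    rcases Complex.exp_eq_one_iff.1 hzz with ⟨k, hk⟩
    have h2 : (θ:ℂ) = 2*π*k :=
      mul_right_cancel₀ Complex.I_ne_zero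
        (by linear_combination hk : (θ:ℂ)*Complex.I = (2*π*(k:ℂ))*Complex.I)
    have hθr : θ = 2*π*k := by exact_mod_cast h2
    apply h
    rw [show θ/2 = k*π by rw [hθr]; ring, Real.sin_int_mul_pi]
  have habs : ‖z - 1‖ = 2 * |Real.sin (θ/2)| := by
    have hcos : Real.cos θ = 1 - 2 * Real.sin (θ/2)^2 := by
      have h2 := Real.cos_two_mul (θ/2)
      have h3 := Real.sin_sq_add_cos_sq (θ/2)
      rw [show 2*(θ/2) = θ by ring] at h2
      nlinarith
    have hz2 : z - 1 = Complex.ofReal (Real.cos θ - 1) + Complex.ofReal (Real.sin θ) * Complex.I := by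
      rw [hz, Complex.exp_mul_I]
      rw [← Complex.ofReal_cos, ← Complex.ofReal_sin]
      push_cast
      ring
    rw [hz2]
    have habs2 : ‖(Complex.ofReal (Real.cos θ - 1)) + Complex.ofReal (Real.sin θ) * Complex.I‖^2
        = (Real.cos θ - 1)^2 + (Real.sin θ)^2 := by
      rw [Complex.sq_norm]
      exact_mod_cast Complex.normSq_add_mul_I (Real.cos θ - 1) (Real.sin θ)
    have hsq : (Real.cos θ - 1)^2 + (Real.sin θ)^2 = (2*|Real.sin (θ/2)|)^2 := by
      have h3 := Real.sin_sq_add_cos_sq θ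
      have h4 : |Real.sin (θ/2)|^2 = Real.sin (θ/2)^2 := sq_abs _
      nlinarith
    nlinarith [habs2, hsq, norm_nonneg ((Complex.ofReal (Real.cos θ - 1)) + Complex.ofReal (Real.sin θ) * Complex.I), abs_nonneg (Real.sin (θ/2))]
  have hsum : ∑ j ∈ Finset.range M, Real.sin (j*θ + φ)
      = (Complex.exp (φ * Complex.I) * ∑ j ∈ Finset.range M, z ^ j).im := by
    rw [Finset.mul_sum, Complex.im_sum]
    apply Finset.sum_congr rfl
    intro j _
    rw [hz, ← Complex.exp_nat_mul, ← Complex.exp_add]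
    rw [show (φ:ℂ) * Complex.I + (j:ℂ) * ((θ:ℂ) * Complex.I) = ((j*θ + φ : ℝ) : ℂ) * Complex.I by push_cast; ring]
    rw [Complex.exp_ofReal_mul_I_im]
  rw [hsum]
  have hspos : (0:ℝ) < |Real.sin (θ/2)| := abs_pos.2 h
  calc |(Complex.exp (φ * Complex.I) * ∑ j ∈ Finset.range M, z ^ j).im|
      ≤ ‖Complex.exp (φ * Complex.I) * ∑ j ∈ Finset.range M, z ^ j‖ :=
        Complex.abs_im_le_norm _
    _ ≤ 1 / |Real.sin (θ/2)| := by
        rw [norm_mul, Complex.norm_exp_ofReal_mul_I, one_mul, geom_sum_eq hz1, norm_div, habs]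
        have h1 : ‖z^M‖ = 1 := by
          rw [norm_pow, hz, Complex.norm_exp_ofReal_mul_I, one_pow]
        have hnum : ‖z^M - 1‖ ≤ 2 := by
          have h2 := norm_sub_le (z^M) (1:ℂ)
          rw [norm_one] at h2
          · rw [h1] at h2; linarith
        rw [div_le_div_iff₀ (by positivity) hspos]
        nlinarith [norm_nonneg (z^M - 1)]

lemma sin_lower (y δ : ℝ) (hδ : 0 ≤ δ) (h1 : δ ≤ y) (h2 : δ ≤ |y - π|) (h3 : y ≤ 2*π - δ) :
    2/π * δ ≤ |Real.sin y| := by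
  have hπ := Real.pi_pos
  rcases le_or_gt y π with hyπ | hyπ
  · have hsgn : |Real.sin y| = Real.sin y :=
      abs_of_nonneg (Real.sin_nonneg_of_nonneg_of_le_pi (by linarith) hyπ)
    rw [hsgn]
    have h2' : δ ≤ π - y := by
      rcases le_abs.1 h2 with h | h
      · linarith
      · linarith
    rcases le_or_gt y (π/2) with hy2 | hy2
    · calc 2/π * δ ≤ 2/π * y := by gcongr
        _ ≤ Real.sin y := Real.mul_le_sin (by linarith) hy2
    · rw [← Real.sin_pi_sub]
      calc 2/π * δ ≤ 2/π * (π - y) := by gcongr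
        _ ≤ Real.sin (π - y) := Real.mul_le_sin (by linarith) (by linarith)
  · have h2' : δ ≤ y - π := by
      rcases le_abs.1 h2 with h | h
      · linarith
      · linarith
    have hsgn : |Real.sin y| = Real.sin (y - π) := by
      have hs := Real.sin_add_pi (y - π)
      rw [show y - π + π = y by ring] at hs
      rw [hs, abs_neg]
      exact abs_of_nonneg (Real.sin_nonneg_of_nonneg_of_le_pi (by linarith) (by linarith))
    rw [hsgn]
    rcases le_or_gt (y - π) (π/2) with hy2 | hy2
    · calc 2/π * δ ≤ 2/π * (y - π) := by gcongr
        _ ≤ Real.sin (y - π) := Real.mul_le_sin (by linarith) hy2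
    · rw [← Real.sin_pi_sub]
      calc 2/π * δ ≤ 2/π * (π - (y - π)) := by gcongr; linarith
        _ ≤ Real.sin (π - (y - π)) := Real.mul_le_sin (by linarith) (by linarith)

lemma abel_bound (p q θ φ B : ℝ) (hp : 0 ≤ p) (hq : 0 ≤ q)
    (hB : ∀ M : ℕ, |∑ j ∈ Finset.range M, Real.sin (j*θ + φ)| ≤ B) (M : ℕ) :
    |∑ j ∈ Finset.range M, (p*j + q) * Real.sin (j*θ + φ)| ≤ (2*p*M + q) * B := by
  have hB0 : (0:ℝ) ≤ B := by simpa using hB 0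
  rcases Nat.eq_zero_or_pos M with rfl | hM
  · simp; positivity
  · have hparts := Finset.sum_range_by_parts (fun i : ℕ => p*i + q)
      (fun i : ℕ => Real.sin (i*θ + φ)) M
    simp only [smul_eq_mul] at hparts
    rw [hparts]
    have hstep : |∑ i ∈ Finset.range (M-1),
        (p*(i+1:ℕ) + q - (p*i + q)) * ∑ j ∈ Finset.range (i+1), Real.sin (j*θ + φ)|
        ≤ (M-1 : ℕ) * (p * B) := by
      calc |∑ i ∈ Finset.range (M-1),
          (p*(i+1:ℕ) + q - (p*i + q)) * ∑ j ∈ Finset.range (i+1), Real.sin (j*θ + φ)|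
          ≤ ∑ i ∈ Finset.range (M-1),
            |(p*(i+1:ℕ) + q - (p*i + q)) * ∑ j ∈ Finset.range (i+1), Real.sin (j*θ + φ)| :=
            Finset.abs_sum_le_sum_abs _ _
        _ ≤ ∑ i ∈ Finset.range (M-1), p * B := by
            apply Finset.sum_le_sum
            intro i _
            rw [abs_mul]
            have : |p*(i+1:ℕ) + q - (p*i + q)| = p := by
              rw [show p*(i+1:ℕ) + q - (p*i + q) = p by push_cast; ring]
              exact abs_of_nonneg hp
            rw [this]
            exact mul_le_mul_of_nonneg_left (hB _) hp
        _ = (M-1 : ℕ) * (p * B) := by rw [Finset.sum_const, Finset.card_range, nsmul_eq_mul]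
    have hfirst : |(p*(M-1:ℕ) + q) * ∑ j ∈ Finset.range M, Real.sin (j*θ + φ)|
        ≤ (p*(M-1:ℕ) + q) * B := by
      rw [abs_mul, abs_of_nonneg (by positivity : (0:ℝ) ≤ p*(M-1:ℕ) + q)]
      exact mul_le_mul_of_nonneg_left (hB _) (by positivity)
    calc |(p*(M-1:ℕ) + q) * ∑ j ∈ Finset.range M, Real.sin (j*θ + φ) -
        ∑ i ∈ Finset.range (M-1),
          (p*(i+1:ℕ) + q - (p*i + q)) * ∑ j ∈ Finset.range (i+1), Real.sin (j*θ + φ)|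
        ≤ (p*(M-1:ℕ) + q) * B + (M-1 : ℕ) * (p * B) :=
          (abs_sub _ _).trans (add_le_add hfirst hstep)
      _ ≤ (2*p*M + q) * B := by
          have h1 : ((M-1 : ℕ) : ℝ) ≤ (M:ℝ) := by exact_mod_cast Nat.sub_le M 1
          nlinarith [mul_le_mul_of_nonneg_right (mul_le_mul_of_nonneg_left h1 hp) hB0]

set_option maxHeartbeats 1000000 in
/-- Uniform estimate `B_n(x) = O(n^(1+a))` on
`E_n = [0, π/ℓ] \ ([0, n^(-a)] ∪ [π/(2ℓ) - n^(-a), π/(2ℓ) + n^(-a)] ∪ [π/ℓ - n^(-a), π/ℓ])`. -/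
theorem estimate_B_pairwise_blocks
    (ℓ : ℕ) (hℓ : 1 ≤ ℓ) (ν : ℝ) (hν : ν ∈ Set.Ioo (0 : ℝ) (1 / 5)) :
    ∃ C > 0, ∃ N : ℕ, ∀ n ≥ N, ∀ m : ℕ, ∀ r : ℤ,
      (n : ℤ) = 2 * ℓ * m + r → -1 ≤ r → r ≤ 2 * ℓ - 2 →
      ∀ x ∈ Set.Icc (0 : ℝ) (π / ℓ) \
          (Set.Icc (0 : ℝ) ((n : ℝ) ^ (-ν)) ∪
            Set.Icc (π / (2 * ℓ) - (n : ℝ) ^ (-ν)) (π / (2 * ℓ) + (n : ℝ) ^ (-ν)) ∪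
            Set.Icc (π / ℓ - (n : ℝ) ^ (-ν)) (π / ℓ)),
        |-(∑ j ∈ Finset.range m, ∑ k ∈ Finset.range ℓ,
              (Real.cos (((2 * ℓ * j + k : ℕ) : ℝ) * x) +
                Real.cos (((2 * ℓ * j + ℓ + k : ℕ) : ℝ) * x)) *
              (((2 * ℓ * j + k : ℕ) : ℝ) * Real.sin (((2 * ℓ * j + k : ℕ) : ℝ) * x) +
                ((2 * ℓ * j + ℓ + k : ℕ) : ℝ) *
                  Real.sin (((2 * ℓ * j + ℓ + k : ℕ) : ℝ) * x))) -
            ∑ j ∈ Finset.Icc (2 * ℓ * m) n,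
              (j : ℝ) * Real.sin ((j : ℝ) * x) * Real.cos ((j : ℝ) * x)|
        ≤ C * (n : ℝ) ^ (1 + ν) := by
  obtain ⟨hν0, hν5⟩ := hν
  set L : ℝ := (ℓ : ℝ) with hLdef
  have hL1 : (1:ℝ) ≤ L := by rw [hLdef]; exact_mod_cast hℓ
  have hLpos : (0:ℝ) < L := by linarith
  refine ⟨100 * L^2, by positivity, 1, ?_⟩
  intro n hn m r hnr hr1 hr2 x hx
  have hnpos : (0:ℝ) < (n:ℝ) := by exact_mod_cast hn
  have hnR : (1:ℝ) ≤ (n:ℝ) := by exact_mod_cast hn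
  set ε : ℝ := (n:ℝ)^(-ν) with hεdef
  have hεpos : 0 < ε := Real.rpow_pos_of_pos hnpos _
  obtain ⟨⟨hx0, hxub⟩, hxn⟩ := hx
  simp only [Set.mem_union, Set.mem_Icc, not_or, not_and, not_le] at hxn
  have hA : ε < x := hxn.1.1 hx0
  have hC : x < π/L - ε := by
    by_contra h
    push_neg at h
    exact absurd (hxn.2 h) (not_lt.2 hxub)
  have hBc : x < π/(2*L) - ε ∨ π/(2*L) + ε < x := by
    rcases le_or_gt (π/(2*L) - ε) x with h | h
    · right; exact hxn.1.2 h
    · left; exact h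
  have hπ0 := Real.pi_pos
  have h2L : 2*L*(π/(2*L)) = π := by field_simp
  have hLL : L*(π/L) = π := by field_simp
  -- lower bound on |sin (2Lx)|
  have hsin : 2/π * (2*L*ε) ≤ |Real.sin (2*L*x)| := by
    apply sin_lower
    · positivity
    · nlinarith
    · rcases hBc with h | h
      · apply le_abs.2; right
        nlinarith
      · apply le_abs.2; left
        nlinarith
    · nlinarith
  have hεsin : ε ≤ |Real.sin (2*L*x)| := by
    refine le_trans ?_ hsin
    rw [div_mul_eq_mul_div, le_div_iff₀ hπ0]
    nlinarith [Real.pi_le_four]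
  have hsinne : Real.sin (2*L*x) ≠ 0 := by
    intro h0; rw [h0, abs_zero] at hεsin; linarith
  have hpow : (0:ℝ) < (n:ℝ)^ν := Real.rpow_pos_of_pos hnpos _
  have hνinv : ε = ((n:ℝ)^ν)⁻¹ := by rw [hεdef, Real.rpow_neg hnpos.le]
  have hinv : 1/|Real.sin (2*L*x)| ≤ (n:ℝ)^ν := by
    rw [div_le_iff₀ (lt_of_lt_of_le hεpos hεsin)]
    calc (1:ℝ) = (n:ℝ)^ν * ((n:ℝ)^ν)⁻¹ := (mul_inv_cancel₀ hpow.ne').symm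
      _ ≤ (n:ℝ)^ν * |Real.sin (2*L*x)| := by
          apply mul_le_mul_of_nonneg_left _ hpow.le
          rw [← hνinv]; exact hεsin
  have hBsum : ∀ φ : ℝ, ∀ M : ℕ,
      |∑ j ∈ Finset.range M, Real.sin (j*(4*L*x) + φ)| ≤ (n:ℝ)^ν := by
    intro φ M
    have hh : Real.sin ((4*L*x)/2) ≠ 0 := by
      rw [show (4*L*x)/2 = 2*L*x by ring]; exact hsinne
    have hd := dirichlet_bound (4*L*x) φ hh M
    rw [show (4*L*x)/2 = 2*L*x by ring] at hd
    exact hd.trans hinv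
  have key : ∀ p q φ : ℝ, 0 ≤ p → 0 ≤ q →
      |∑ j ∈ Finset.range m, (p*j + q) * Real.sin (j*(4*L*x) + φ)| ≤ (2*p*m + q) * (n:ℝ)^ν :=
    fun p q φ hp hq => abel_bound p q (4*L*x) φ _ hp hq (fun M' => hBsum φ M') m
  -- rewrite the double sum
  have hterm : ∀ j k : ℕ,
      (Real.cos (((2 * ℓ * j + k : ℕ) : ℝ) * x) + Real.cos (((2 * ℓ * j + ℓ + k : ℕ) : ℝ) * x)) *
        (((2 * ℓ * j + k : ℕ) : ℝ) * Real.sin (((2 * ℓ * j + k : ℕ) : ℝ) * x) +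
          ((2 * ℓ * j + ℓ + k : ℕ) : ℝ) * Real.sin (((2 * ℓ * j + ℓ + k : ℕ) : ℝ) * x))
      = (L*(j:ℝ) + (k:ℝ)/2) * Real.sin ((j:ℝ)*(4*L*x) + 2*(k:ℝ)*x)
        + (L*(j:ℝ) + (L+(k:ℝ))/2) * Real.sin ((j:ℝ)*(4*L*x) + (2*L+2*(k:ℝ))*x)
        + (2*L*(j:ℝ) + (L+2*(k:ℝ))/2) * Real.sin ((j:ℝ)*(4*L*x) + (L+2*(k:ℝ))*x)
        + L/2 * Real.sin (L*x) := by
    intro j k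
    have h1 : ((2 * ℓ * j + k : ℕ) : ℝ) = 2*L*(j:ℝ) + (k:ℝ) := by push_cast; ring
    have h2 : ((2 * ℓ * j + ℓ + k : ℕ) : ℝ) = 2*L*(j:ℝ) + L + (k:ℝ) := by push_cast; ring
    rw [h1, h2]
    exact trig_id L k j x
  have hsplit : ∀ k : ℕ, (k:ℝ) ≤ L →
      |∑ j ∈ Finset.range m,
        ((L*(j:ℝ) + (k:ℝ)/2) * Real.sin ((j:ℝ)*(4*L*x) + 2*(k:ℝ)*x)
        + (L*(j:ℝ) + (L+(k:ℝ))/2) * Real.sin ((j:ℝ)*(4*L*x) + (2*L+2*(k:ℝ))*x)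
        + (2*L*(j:ℝ) + (L+2*(k:ℝ))/2) * Real.sin ((j:ℝ)*(4*L*x) + (L+2*(k:ℝ))*x)
        + L/2 * Real.sin (L*x))|
      ≤ (8*L*m + 4*L) * (n:ℝ)^ν + m*(L/2) := by
    intro k hk
    have hk0 : (0:ℝ) ≤ (k:ℝ) := Nat.cast_nonneg k
    rw [Finset.sum_add_distrib, Finset.sum_add_distrib, Finset.sum_add_distrib]
    have b1 := key L ((k:ℝ)/2) (2*(k:ℝ)*x) hLpos.le (by positivity)
    have b2 := key L ((L+(k:ℝ))/2) ((2*L+2*(k:ℝ))*x) hLpos.le (by positivity)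
    have b3 := key (2*L) ((L+2*(k:ℝ))/2) ((L+2*(k:ℝ))*x) (by positivity) (by positivity)
    have b4 : |∑ _j ∈ Finset.range m, L/2 * Real.sin (L*x)| ≤ m*(L/2) := by
      rw [Finset.sum_const, Finset.card_range, nsmul_eq_mul, abs_mul, Nat.abs_cast]
      have : |L/2 * Real.sin (L*x)| ≤ L/2 := by
        rw [abs_mul, abs_of_nonneg (by positivity : (0:ℝ) ≤ L/2)]
        nlinarith [Real.abs_sin_le_one (L*x), abs_nonneg (Real.sin (L*x))]
      exact mul_le_mul_of_nonneg_left this (Nat.cast_nonneg m)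
    refine le_trans (abs_add_le _ _) ?_
    refine le_trans (add_le_add_left (abs_add_three _ _ _) _) ?_
    refine le_trans (add_le_add (add_le_add (add_le_add b1 b2) b3) b4) ?_
    have hm0 : (0:ℝ) ≤ (m:ℝ) := Nat.cast_nonneg m
    nlinarith [hpow.le, mul_le_mul_of_nonneg_right hk (hpow.le)]
  have hrw : (∑ j ∈ Finset.range m, ∑ k ∈ Finset.range ℓ,
      (Real.cos (((2 * ℓ * j + k : ℕ) : ℝ) * x) +
        Real.cos (((2 * ℓ * j + ℓ + k : ℕ) : ℝ) * x)) *
      (((2 * ℓ * j + k : ℕ) : ℝ) * Real.sin (((2 * ℓ * j + k : ℕ) : ℝ) * x) +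
        ((2 * ℓ * j + ℓ + k : ℕ) : ℝ) * Real.sin (((2 * ℓ * j + ℓ + k : ℕ) : ℝ) * x)))
      = ∑ k ∈ Finset.range ℓ, ∑ j ∈ Finset.range m,
        ((L*(j:ℝ) + (k:ℝ)/2) * Real.sin ((j:ℝ)*(4*L*x) + 2*(k:ℝ)*x)
        + (L*(j:ℝ) + (L+(k:ℝ))/2) * Real.sin ((j:ℝ)*(4*L*x) + (2*L+2*(k:ℝ))*x)
        + (2*L*(j:ℝ) + (L+2*(k:ℝ))/2) * Real.sin ((j:ℝ)*(4*L*x) + (L+2*(k:ℝ))*x)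
        + L/2 * Real.sin (L*x)) := by
    rw [Finset.sum_comm]
    exact Finset.sum_congr rfl fun k _ => Finset.sum_congr rfl fun j _ => hterm j k
  have hS : |∑ k ∈ Finset.range ℓ, ∑ j ∈ Finset.range m,
        ((L*(j:ℝ) + (k:ℝ)/2) * Real.sin ((j:ℝ)*(4*L*x) + 2*(k:ℝ)*x)
        + (L*(j:ℝ) + (L+(k:ℝ))/2) * Real.sin ((j:ℝ)*(4*L*x) + (2*L+2*(k:ℝ))*x)
        + (2*L*(j:ℝ) + (L+2*(k:ℝ))/2) * Real.sin ((j:ℝ)*(4*L*x) + (L+2*(k:ℝ))*x)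
        + L/2 * Real.sin (L*x))|
      ≤ L * ((8*L*m + 4*L) * (n:ℝ)^ν + m*(L/2)) := by
    refine le_trans (Finset.abs_sum_le_sum_abs _ _) ?_
    refine le_trans (Finset.sum_le_sum fun k hk => hsplit k ?_) ?_
    · simp only [hLdef]
      exact_mod_cast (Finset.mem_range.1 hk).le
    · rw [Finset.sum_const, Finset.card_range, nsmul_eq_mul]
  have hT : |∑ j ∈ Finset.Icc (2 * ℓ * m) n,
        (j : ℝ) * Real.sin ((j : ℝ) * x) * Real.cos ((j : ℝ) * x)| ≤ 2*L*(n:ℝ) := by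
    have hcard : ((Finset.Icc (2*ℓ*m) n).card : ℝ) ≤ 2*L := by
      rw [Nat.card_Icc]
      have h0 : ((2*ℓ*m : ℕ) : ℤ) = 2*(ℓ:ℤ)*m := by push_cast; ring
      have h1 : n + 1 - 2*ℓ*m ≤ 2*ℓ := by omega
      have h2 : ((n + 1 - 2*ℓ*m : ℕ):ℝ) ≤ ((2*ℓ : ℕ):ℝ) := Nat.cast_le.mpr h1
      simp only [hLdef]
      push_cast at h2 ⊢
      linarith
    refine le_trans (Finset.abs_sum_le_sum_abs _ _) ?_
    have hv : ∀ j ∈ Finset.Icc (2*ℓ*m) n,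
        |(j : ℝ) * Real.sin ((j : ℝ) * x) * Real.cos ((j : ℝ) * x)| ≤ (n:ℝ) := by
      intro j hj
      have hjn : (j:ℝ) ≤ (n:ℝ) := Nat.cast_le.mpr (Finset.mem_Icc.1 hj).2
      have h1 := Real.abs_sin_le_one ((j:ℝ)*x)
      have h2 := Real.abs_cos_le_one ((j:ℝ)*x)
      have hj0 : (0:ℝ) ≤ (j:ℝ) := Nat.cast_nonneg j
      rw [abs_mul, abs_mul, Nat.abs_cast]
      calc (j:ℝ) * |Real.sin ((j:ℝ)*x)| * |Real.cos ((j:ℝ)*x)| ≤ (n:ℝ) * 1 * 1 := by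
            gcongr <;> assumption
        _ = (n:ℝ) := by ring
    refine le_trans (Finset.sum_le_sum hv) ?_
    rw [Finset.sum_const, nsmul_eq_mul]
    exact mul_le_mul_of_nonneg_right hcard hnpos.le
  -- arithmetic facts
  have hmn : 2*L*(m:ℝ) ≤ (n:ℝ) + 1 := by
    have h0 : ((2*ℓ*m : ℕ) : ℤ) = 2*(ℓ:ℤ)*m := by push_cast; ring
    have h1 : 2*(ℓ:ℤ)*m ≤ (n:ℤ) + 1 := by omega
    simp only [hLdef]
    exact_mod_cast h1
  have hLm : L*(m:ℝ) ≤ (n:ℝ) := by nlinarith [(Nat.cast_nonneg m : (0:ℝ) ≤ (m:ℝ))]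
  have hpow1 : (n:ℝ)*(n:ℝ)^ν = (n:ℝ)^(1+ν) := by
    rw [Real.rpow_add hnpos, Real.rpow_one]
  have hpow2 : (n:ℝ)^ν ≤ (n:ℝ)^(1+ν) :=
    Real.rpow_le_rpow_of_exponent_le hnR (by linarith)
  have hpow3 : (n:ℝ) ≤ (n:ℝ)^(1+ν) := by
    calc (n:ℝ) = (n:ℝ)^(1:ℝ) := (Real.rpow_one _).symm
      _ ≤ (n:ℝ)^(1+ν) := Real.rpow_le_rpow_of_exponent_le hnR (by linarith)
  have hP0 : (0:ℝ) ≤ (n:ℝ)^(1+ν) := Real.rpow_nonneg hnpos.le _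
  have e1 : L*(m:ℝ)*(n:ℝ)^ν ≤ (n:ℝ)^(1+ν) := by
    calc L*(m:ℝ)*(n:ℝ)^ν ≤ (n:ℝ)*(n:ℝ)^ν := mul_le_mul_of_nonneg_right hLm hpow.le
      _ = _ := hpow1
  have g1 : 8*L*(L*(m:ℝ)*(n:ℝ)^ν) ≤ 8*L*((n:ℝ)^(1+ν)) :=
    mul_le_mul_of_nonneg_left e1 (by positivity)
  have g2 : 4*L^2*((n:ℝ)^ν) ≤ 4*L^2*((n:ℝ)^(1+ν)) :=
    mul_le_mul_of_nonneg_left hpow2 (by positivity)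
  have g3 : (L/2)*(L*(m:ℝ)) ≤ (L/2)*(n:ℝ) :=
    mul_le_mul_of_nonneg_left hLm (by positivity)
  have g4 : (L/2)*(n:ℝ) ≤ (L/2)*((n:ℝ)^(1+ν)) :=
    mul_le_mul_of_nonneg_left hpow3 (by positivity)
  have g5 : 2*L*(n:ℝ) ≤ 2*L*((n:ℝ)^(1+ν)) :=
    mul_le_mul_of_nonneg_left hpow3 (by positivity)
  have g6 : (0:ℝ) ≤ (100*L^2 - 4*L^2 - 8*L - L/2 - 2*L) * ((n:ℝ)^(1+ν)) :=
    mul_nonneg (by nlinarith) hP0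
  rw [sub_eq_add_neg, ← neg_add, abs_neg]
  refine le_trans (abs_add_le _ _) ?_
  rw [hrw]
  nlinarith [hS, hT, g1, g2, g3, g4, g5, g6]
end

section
/- Fix a ∈ (0, 1/2). For odd n ∈ ℕ set m = (n−1)/2. Then there exist C > 0 and N such that for all odd n ≥ N and all x ∈ [n^{−a}, π − n^{−a}], |Σ_{j=0}^{m} (j + (n+1)/4)² sin²((j + (n+1)/4)x) − 13n³/192| ≤ C n^{2+a}. -/
open Real Set

private lemma sum_shift_sq (c : ℝ) (k : ℕ) :
    ∑ j ∈ Finset.range (k+1), ((j:ℝ)+c)^2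
      = (k:ℝ)*((k:ℝ)+1)*(2*(k:ℝ)+1)/6 + c*(k:ℝ)*((k:ℝ)+1) + ((k:ℝ)+1)*c^2 := by
  induction k with
  | zero => simp
  | succ k ih => rw [Finset.sum_range_succ, ih]; push_cast; ring

private lemma cos_sum_bound (x : ℝ) (hx : 0 < Real.sin x) (c : ℝ) (k : ℕ) :
    |∑ j ∈ Finset.range k, Real.cos ((c + j) * (2*x))| ≤ 1 / Real.sin x := by
  set z : ℂ := Complex.exp ((2*x : ℝ) * Complex.I) with hzdef
  have hzabs : ‖z‖ = 1 := by
    rw [hzdef, Complex.norm_exp]; simp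
  have hz1 : ‖z - 1‖ = 2 * Real.sin x := by
    have h1 : ‖z - 1‖ ^ 2 = (2 * Real.sin x) ^ 2 := by
      rw [Complex.sq_norm, hzdef, Complex.normSq_apply, Complex.sub_re, Complex.sub_im,
        Complex.exp_ofReal_mul_I_re, Complex.exp_ofReal_mul_I_im, Complex.one_re, Complex.one_im]
      have hc : Real.cos (2*x) = 1 - 2 * Real.sin x ^ 2 := by
        rw [Real.cos_two_mul']
        nlinarith [Real.sin_sq_add_cos_sq x]
      nlinarith [Real.sin_sq_add_cos_sq (2*x)]
    have h2 : (0:ℝ) ≤ ‖z-1‖ := norm_nonneg _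
    nlinarith
  have hzne : z ≠ 1 := by
    intro h
    rw [h] at hz1
    simp at hz1
    linarith
  have key : ∑ j ∈ Finset.range k, Real.cos ((c + j) * (2*x))
      = (Complex.exp ((c*(2*x) : ℝ) * Complex.I) * ∑ j ∈ Finset.range k, z ^ j).re := by
    rw [Finset.mul_sum, Complex.re_sum]
    refine Finset.sum_congr rfl fun j _ => ?_
    rw [hzdef, ← Complex.exp_nat_mul, ← Complex.exp_add]
    rw [show ((c*(2*x) : ℝ) * Complex.I + (j:ℂ) * ((2*x : ℝ) * Complex.I))
        = (((c + j) * (2*x) : ℝ) : ℂ) * Complex.I by push_cast; ring]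
    exact (Complex.exp_ofReal_mul_I_re _).symm
  rw [key]
  have h3 : ‖∑ j ∈ Finset.range k, z ^ j‖ ≤ 1 / Real.sin x := by
    rw [geom_sum_eq hzne, norm_div, hz1]
    have h4 : ‖z ^ k - 1‖ ≤ 2 := by
      calc ‖z ^ k - 1‖ ≤ ‖z ^ k‖ + 1 := by
            simpa using norm_sub_le (z ^ k) 1
        _ ≤ 2 := by rw [norm_pow, hzabs]; norm_num
    rw [div_le_div_iff₀ (by positivity) hx]
    nlinarith
  calc |(Complex.exp ((c*(2*x) : ℝ) * Complex.I) * ∑ j ∈ Finset.range k, z ^ j).re|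
      ≤ ‖Complex.exp ((c*(2*x) : ℝ) * Complex.I) * ∑ j ∈ Finset.range k, z ^ j‖ :=
        Complex.abs_re_le_norm _
    _ = ‖∑ j ∈ Finset.range k, z ^ j‖ := by
        rw [norm_mul, Complex.norm_exp]; simp
    _ ≤ 1 / Real.sin x := h3

set_option maxHeartbeats 1000000 in
/-- For odd `n` and `m = (n-1)/2`, uniformly for `x ∈ [n^(-a), π - n^(-a)]`,
`Σ_{j=0}^{m} (j + (n+1)/4)² sin²((j + (n+1)/4)x) = 13n³/192 + O(n^(2+a))`. -/
theorem estimate_C_two_blocks_odd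
    (ν : ℝ) (hν : ν ∈ Set.Ioo (0 : ℝ) (1 / 2)) :
    ∃ C > 0, ∃ N : ℕ, ∀ n ≥ N, Odd n →
      ∀ x ∈ Set.Icc ((n : ℝ) ^ (-ν)) (π - (n : ℝ) ^ (-ν)),
        |(∑ j ∈ Finset.range ((n - 1) / 2 + 1),
            ((j : ℝ) + ((n : ℝ) + 1) / 4) ^ 2 *
              Real.sin (((j : ℝ) + ((n : ℝ) + 1) / 4) * x) ^ 2) -
          13 * (n : ℝ) ^ 3 / 192|
          ≤ C * (n : ℝ) ^ (2 + ν) := by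
  obtain ⟨hν0, hν1⟩ := hν
  refine ⟨1 + π/2, by positivity, 1, ?_⟩
  intro n hn hodd x hx
  obtain ⟨k, hk⟩ := hodd
  have hn1 : (1:ℝ) ≤ (n:ℝ) := by exact_mod_cast hn
  have hnpos : (0:ℝ) < (n:ℝ) := by linarith
  have hm : (n - 1) / 2 = k := by omega
  obtain ⟨hx1, hx2⟩ := hx
  set t : ℝ := (n:ℝ) ^ (-ν) with ht
  have ht0 : 0 < t := Real.rpow_pos_of_pos hnpos _
  have ht1 : t ≤ 1 := Real.rpow_le_one_of_one_le_of_nonpos hn1 (by linarith)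
  have hpi : (3:ℝ) < π := Real.pi_gt_three
  have hxpos : 0 < x := lt_of_lt_of_le ht0 hx1
  have hsin : 2/π * t ≤ Real.sin x := by
    rcases le_or_gt x (π/2) with h | h
    · calc 2/π * t ≤ 2/π * x := by
            apply mul_le_mul_of_nonneg_left hx1; positivity
        _ ≤ Real.sin x := Real.mul_le_sin hxpos.le h
    · rw [← Real.sin_pi_sub]
      have h2 : t ≤ π - x := by linarith
      calc 2/π * t ≤ 2/π * (π - x) := by
            apply mul_le_mul_of_nonneg_left h2; positivity
        _ ≤ Real.sin (π - x) := Real.mul_le_sin (by linarith) (by linarith)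
  have hsin0 : 0 < Real.sin x := lt_of_lt_of_le (by positivity) hsin
  have hnν : 0 < (n:ℝ)^ν := Real.rpow_pos_of_pos hnpos _
  have hid : (n:ℝ)^ν * t = 1 := by
    rw [ht, ← Real.rpow_add hnpos]; simp
  have h5 : (2/π) ≤ (n:ℝ)^ν * Real.sin x := by
    calc (2/π) = (n:ℝ)^ν * (2/π * t) := by
          rw [show (n:ℝ)^ν * (2/π*t) = 2/π*((n:ℝ)^ν*t) by ring, hid, mul_one]
      _ ≤ _ := mul_le_mul_of_nonneg_left hsin hnν.le
  have hinv : 1 / Real.sin x ≤ π/2 * (n:ℝ)^ν := by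
    rw [div_le_iff₀ hsin0]
    calc (1:ℝ) = π/2 * (2/π) := by field_simp
      _ ≤ π/2 * ((n:ℝ)^ν * Real.sin x) := by
          apply mul_le_mul_of_nonneg_left h5; positivity
      _ = π/2 * (n:ℝ)^ν * Real.sin x := by ring
  set c : ℝ := ((n:ℝ)+1)/4 with hcdef
  have hc : c = ((k:ℝ)+1)/2 := by rw [hcdef, hk]; push_cast; ring
  have hc0 : 0 < c := by rw [hc]; positivity
  have hsplit : ∑ j ∈ Finset.range ((n-1)/2+1), ((j:ℝ)+c)^2 * Real.sin (((j:ℝ)+c)*x)^2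
      = (∑ j ∈ Finset.range (k+1), ((j:ℝ)+c)^2)/2
        - (∑ j ∈ Finset.range (k+1), ((j:ℝ)+c)^2 * Real.cos ((c + (j:ℝ))*(2*x)))/2 := by
    rw [hm, show (∑ j ∈ Finset.range (k+1), ((j:ℝ)+c)^2)/2
        - (∑ j ∈ Finset.range (k+1), ((j:ℝ)+c)^2 * Real.cos ((c + (j:ℝ))*(2*x)))/2
      = ∑ j ∈ Finset.range (k+1),
          (((j:ℝ)+c)^2/2 - ((j:ℝ)+c)^2 * Real.cos ((c+(j:ℝ))*(2*x))/2) from by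
        rw [Finset.sum_sub_distrib, Finset.sum_div, Finset.sum_div]]
    refine Finset.sum_congr rfl fun j _ => ?_
    rw [Real.sin_sq_eq_half_sub, show 2*(((j:ℝ)+c)*x) = (c+(j:ℝ))*(2*x) by ring]
    ring
  have hA : |(∑ j ∈ Finset.range (k+1), ((j:ℝ)+c)^2)/2 - 13*(n:ℝ)^3/192| ≤ (n:ℝ)^2 := by
    rw [sum_shift_sq, hc, hk]
    push_cast
    rw [abs_le]
    constructor <;> nlinarith [sq_nonneg ((k:ℝ)), sq_nonneg ((k:ℝ)+1)]
  have hB : ∀ K : ℕ, |∑ j ∈ Finset.range K, Real.cos ((c+(j:ℝ))*(2*x))| ≤ 1/Real.sin x :=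
    cos_sum_bound x hsin0 c
  have hB0 : (0:ℝ) ≤ 1/Real.sin x := by positivity
  have hT : |∑ j ∈ Finset.range (k+1), ((j:ℝ)+c)^2 * Real.cos ((c+(j:ℝ))*(2*x))|
      ≤ 2*(((k:ℝ)+c)^2) * (1/Real.sin x) := by
    have habel := Finset.sum_range_by_parts (fun j : ℕ => ((j:ℝ)+c)^2)
      (fun j : ℕ => Real.cos ((c+(j:ℝ))*(2*x))) (k+1)
    simp only [smul_eq_mul, Nat.add_sub_cancel] at habel
    rw [habel]
    have hΔ : ∀ i : ℕ, (0:ℝ) ≤ (((i+1:ℕ):ℝ)+c)^2 - ((i:ℝ)+c)^2 := by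
      intro i
      push_cast
      nlinarith [Nat.cast_nonneg (α := ℝ) i, hc0]
    have h1 : |((k:ℝ)+c)^2 * ∑ j ∈ Finset.range (k+1), Real.cos ((c+(j:ℝ))*(2*x))|
        ≤ ((k:ℝ)+c)^2 * (1/Real.sin x) := by
      rw [abs_mul, abs_of_nonneg (sq_nonneg _)]
      exact mul_le_mul_of_nonneg_left (hB (k+1)) (sq_nonneg _)
    have h2 : |∑ i ∈ Finset.range k,
          ((((i+1:ℕ):ℝ)+c)^2 - ((i:ℝ)+c)^2) * ∑ j ∈ Finset.range (i+1), Real.cos ((c+(j:ℝ))*(2*x))|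
        ≤ ((k:ℝ)+c)^2 * (1/Real.sin x) := by
      calc |∑ i ∈ Finset.range k,
            ((((i+1:ℕ):ℝ)+c)^2 - ((i:ℝ)+c)^2) * ∑ j ∈ Finset.range (i+1), Real.cos ((c+(j:ℝ))*(2*x))|
          ≤ ∑ i ∈ Finset.range k,
            |((((i+1:ℕ):ℝ)+c)^2 - ((i:ℝ)+c)^2) * ∑ j ∈ Finset.range (i+1), Real.cos ((c+(j:ℝ))*(2*x))| :=
            Finset.abs_sum_le_sum_abs _ _
        _ ≤ ∑ i ∈ Finset.range k, ((((i+1:ℕ):ℝ)+c)^2 - ((i:ℝ)+c)^2) * (1/Real.sin x) := by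
            refine Finset.sum_le_sum fun i _ => ?_
            rw [abs_mul, abs_of_nonneg (hΔ i)]
            exact mul_le_mul_of_nonneg_left (hB (i+1)) (hΔ i)
        _ = (((k:ℝ)+c)^2 - (((0:ℕ):ℝ)+c)^2) * (1/Real.sin x) := by
            rw [← Finset.sum_mul]
            congr 1
            exact Finset.sum_range_sub (fun i : ℕ => ((i:ℝ)+c)^2) k
        _ ≤ ((k:ℝ)+c)^2 * (1/Real.sin x) := by
            nlinarith [mul_nonneg (sq_nonneg ((((0:ℕ):ℝ))+c)) hB0]
    calc |((k:ℝ)+c)^2 * (∑ j ∈ Finset.range (k+1), Real.cos ((c+(j:ℝ))*(2*x)))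
          - ∑ i ∈ Finset.range k,
            ((((i+1:ℕ):ℝ)+c)^2 - ((i:ℝ)+c)^2) * ∑ j ∈ Finset.range (i+1), Real.cos ((c+(j:ℝ))*(2*x))|
        ≤ |((k:ℝ)+c)^2 * ∑ j ∈ Finset.range (k+1), Real.cos ((c+(j:ℝ))*(2*x))|
          + |∑ i ∈ Finset.range k,
            ((((i+1:ℕ):ℝ)+c)^2 - ((i:ℝ)+c)^2) * ∑ j ∈ Finset.range (i+1), Real.cos ((c+(j:ℝ))*(2*x))| :=
          abs_sub _ _
      _ ≤ 2*(((k:ℝ)+c)^2) * (1/Real.sin x) := by linarith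
  have hkc : ((k:ℝ)+c)^2 ≤ (n:ℝ)^2 := by
    rw [hc, hk]; push_cast; nlinarith [Nat.cast_nonneg (α := ℝ) k]
  have hpow : (n:ℝ)^2 * (n:ℝ)^ν = (n:ℝ)^(2+ν) := by
    rw [Real.rpow_add hnpos]
    congr 1
    rw [← Real.rpow_natCast (n:ℝ) 2]; norm_num
  have hmon : (n:ℝ)^2 ≤ (n:ℝ)^(2+ν) := by
    calc (n:ℝ)^2 = (n:ℝ)^((2:ℝ)) := by rw [← Real.rpow_natCast (n:ℝ) 2]; norm_num
      _ ≤ _ := Real.rpow_le_rpow_of_exponent_le hn1 (by linarith)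
  rw [hsplit]
  have hTf : |∑ j ∈ Finset.range (k+1), ((j:ℝ)+c)^2 * Real.cos ((c+(j:ℝ))*(2*x))|
      ≤ 2 * ((n:ℝ)^2 * (π/2 * (n:ℝ)^ν)) := by
    calc _ ≤ 2*(((k:ℝ)+c)^2) * (1/Real.sin x) := hT
      _ = 2*((((k:ℝ)+c)^2) * (1/Real.sin x)) := by ring
      _ ≤ 2 * ((n:ℝ)^2 * (π/2 * (n:ℝ)^ν)) := by
          have := mul_le_mul hkc hinv hB0 (by positivity : (0:ℝ) ≤ (n:ℝ)^2)
          linarith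
  calc |(∑ j ∈ Finset.range (k+1), ((j:ℝ)+c)^2)/2
        - (∑ j ∈ Finset.range (k+1), ((j:ℝ)+c)^2 * Real.cos ((c+(j:ℝ))*(2*x)))/2
        - 13*(n:ℝ)^3/192|
      ≤ |(∑ j ∈ Finset.range (k+1), ((j:ℝ)+c)^2)/2 - 13*(n:ℝ)^3/192|
        + |(∑ j ∈ Finset.range (k+1), ((j:ℝ)+c)^2 * Real.cos ((c+(j:ℝ))*(2*x)))/2| := by
        rw [sub_right_comm]
        exact abs_sub _ _
    _ ≤ (n:ℝ)^2 + (n:ℝ)^2 * (π/2 * (n:ℝ)^ν) := by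
        rw [abs_div]
        have h6 : |(2:ℝ)| = 2 := by norm_num
        rw [h6]
        linarith [hA, hTf]
    _ = (n:ℝ)^2 + π/2 * ((n:ℝ)^2 * (n:ℝ)^ν) := by ring
    _ ≤ (1 + π/2) * (n:ℝ)^(2+ν) := by
        rw [hpow]
        nlinarith [Real.pi_pos, hmon, Real.rpow_pos_of_pos hnpos (2+ν)]
end
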